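/- Let U ⊆ ℝⁿ be bounded open and let ε > 0. There exists k > 0, depending only on H, the diameter of U, and ε, such that whenever u, v ∈ Lip_loc(U) ∩ C(Ū) satisfy u = v on ∂U and sup_{x ∈ U} (S⁺u(x) + S⁺v(x)) ≤ k, then max_{Ū} |u − v| ≤ ε. -/

import Mathlib

open Set Metric MeasureTheory Filter Bornology
open scoped RealInnerProductSpace

noncomputable section

abbrev Euc (n : ℕ) := EuclideanSpace ℝ (Fin n)

variable {n : ℕ}

/-- The Lagrangian of `H`, an extended real number. -/
def Lag (H : Euc n → ℝ) (q : Euc n) : EReal :=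
  ⨆ p : Euc n, ((⟪p, q⟫ - H p : ℝ) : EReal)

/-- `T^t u (x)`, with supremum taken over `y ∈ S`. Points `y` where the Lagrangian term
is `+∞` contribute nothing, since no real number equals `-∞`. -/
def TupOn (H : Euc n → ℝ) (S : Set (Euc n)) (u : Euc n → ℝ) (t : ℝ) (x : Euc n) : ℝ :=
  if t = 0 then u x
  else sSup {r : ℝ | ∃ y ∈ S, (r : EReal) = (u y : EReal) - (t : EReal) * Lag H (t⁻¹ • (y - x))}

/-- `T_t u (x)`, with infimum taken over `y ∈ S`. -/
def TdnOn (H : Euc n → ℝ) (S : Set (Euc n)) (u : Euc n → ℝ) (t : ℝ) (x : Euc n) : ℝ :=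
  if t = 0 then u x
  else sInf {r : ℝ | ∃ y ∈ S, (r : EReal) = (u y : EReal) + (t : EReal) * Lag H (t⁻¹ • (x - y))}

/-- `S⁺ u (x) = limsup_{t ↓ 0} (T^t u(x) - u(x))/t`. -/
def Splus (H : Euc n → ℝ) (U : Set (Euc n)) (u : Euc n → ℝ) (x : Euc n) : ℝ :=
  limsup (fun t => (TupOn H U u t x - u x) / t) (nhdsWithin 0 (Ioi 0))

/-- The oscillation `osc_U u = sup_U u - inf_U u`. -/
def oscOn (u : Euc n → ℝ) (U : Set (Euc n)) : ℝ := sSup (u '' U) - sInf (u '' U)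

/-- `U_r = {x ∈ U : dist(x, ∂U) > r}`. -/
def inUr (U : Set (Euc n)) (r : ℝ) : Set (Euc n) := {x ∈ U | r < infDist x (frontier U)}

/-- The cone function `C_k(x) = max {p·x : H(p) = k}`. -/
def coneFn (H : Euc n → ℝ) (k : ℝ) (x : Euc n) : ℝ :=
  sSup {r : ℝ | ∃ p, H p = k ∧ r = ⟪p, x⟫}

/-- The subdifferential of `H` at `p`. -/
def subdiff (H : Euc n → ℝ) (p : Euc n) : Set (Euc n) :=
  {q | ∀ p', H p + ⟪q, p' - p⟫ ≤ H p'}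

/-- `Γ_k`: subgradients of `H` at points of the level set `H⁻¹(k)`. -/
def GammaSet (H : Euc n → ℝ) (k : ℝ) : Set (Euc n) :=
  {q | ∃ p, H p = k ∧ q ∈ subdiff H p}

/-- `W_k`: subgradients of `H` at points of the sublevel set `H⁻¹([0,k])`. -/
def WSet (H : Euc n → ℝ) (k : ℝ) : Set (Euc n) :=
  {q | ∃ p, 0 ≤ H p ∧ H p ≤ k ∧ q ∈ subdiff H p}

/-- `u ∈ Lip_loc(U)`: `u` is locally Lipschitz on `U`. -/
def LocLipOn (u : Euc n → ℝ) (U : Set (Euc n)) : Prop :=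
  ∀ x ∈ U, ∃ K : NNReal, ∃ s ∈ nhdsWithin x U, LipschitzOnWith K u s

/-- `ess sup_V H(Dv)`, defined to be `+∞` if `v` is not locally Lipschitz in `V`.
Here `Dv` is the a.e.-defined gradient (Rademacher). -/
def essSupH (H : Euc n → ℝ) (V : Set (Euc n)) (v : Euc n → ℝ) : EReal :=
  haveI := Classical.propDecidable (LocLipOn v V)
  if LocLipOn v V then
    essSup (fun x => ((H (gradient v x) : ℝ) : EReal)) (volume.restrict V)
  else ⊤

/-- `u` is absolutely subminimizing for `H` in `U`. -/
def AbsSubmin (H : Euc n → ℝ) (U : Set (Euc n)) (u : Euc n → ℝ) : Prop :=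
  LocLipOn u U ∧
  ∀ V : Set (Euc n), IsOpen V → IsCompact (closure V) → closure V ⊆ U →
    ∀ v : Euc n → ℝ, LocLipOn v V → ContinuousOn v (closure V) →
      EqOn v u (frontier V) → (∀ x ∈ V, v x ≤ u x) →
        essSupH H V u ≤ essSupH H V v

/-- `u` is absolutely superminimizing for `H` in `U`. -/
def AbsSupermin (H : Euc n → ℝ) (U : Set (Euc n)) (u : Euc n → ℝ) : Prop :=
  LocLipOn u U ∧
  ∀ V : Set (Euc n), IsOpen V → IsCompact (closure V) → closure V ⊆ U →
    ∀ v : Euc n → ℝ, LocLipOn v V → ContinuousOn v (closure V) →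
      EqOn v u (frontier V) → (∀ x ∈ V, u x ≤ v x) →
        essSupH H V u ≤ essSupH H V v

/-- `u` satisfies comparisons with cones from above in `U`. -/
def CmpConesAbove (H : Euc n → ℝ) (U : Set (Euc n)) (u : Euc n → ℝ) : Prop :=
  ∀ k : ℝ, 0 ≤ k → ∀ V : Set (Euc n), IsOpen V → IsCompact (closure V) → closure V ⊆ U →
    ∀ x₀, x₀ ∉ V →
      sSup ((fun x => u x - coneFn H k (x - x₀)) '' closure V) =
      sSup ((fun x => u x - coneFn H k (x - x₀)) '' frontier V)

/-- `u` satisfies the convexity criterion in `U`. -/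
def ConvexityCriterion (H : Euc n → ℝ) (U : Set (Euc n)) (u : Euc n → ℝ) : Prop :=
  ∀ V : Set (Euc n), IsOpen V → IsCompact (closure V) → closure V ⊆ U →
    ∃ δ > (0:ℝ), ∀ x ∈ V, ConvexOn ℝ (Icc 0 δ) (fun t => TupOn H U u t x)

/-- `u` satisfies the pointwise convexity criterion in `U`. -/
def PtwiseCC (H : Euc n → ℝ) (U : Set (Euc n)) (u : Euc n → ℝ) : Prop :=
  UpperSemicontinuousOn (Splus H U u) U ∧
  ∀ x ∈ U, ∃ δ > (0:ℝ), ConvexOn ℝ (Icc 0 δ) (fun t => TupOn H U u t x)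

end

noncomputable section PrepatchAux

variable {n : ℕ}

-- auxiliary

def TupSet (H : Euc n → ℝ) (S : Set (Euc n)) (u : Euc n → ℝ) (t : ℝ) (x : Euc n) : Set ℝ :=
  {r : ℝ | ∃ y ∈ S, (r : EReal) = (u y : EReal) - (t : EReal) * Lag H (t⁻¹ • (y - x))}

lemma TupOn_eq (H : Euc n → ℝ) (S : Set (Euc n)) (u : Euc n → ℝ) {t : ℝ} (ht : t ≠ 0)
    (x : Euc n) : TupOn H S u t x = sSup (TupSet H S u t x) := by
  rw [TupOn, if_neg ht]; rfl

lemma lag_nonneg {H : Euc n → ℝ} (hH0 : H 0 = 0) (q : Euc n) : (0 : EReal) ≤ Lag H q := by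
  have := le_iSup (fun p : Euc n => ((⟪p, q⟫ - H p : ℝ) : EReal)) 0
  simpa [Lag, hH0] using this

lemma lag_zero {H : Euc n → ℝ} (hH0 : H 0 = 0) (hHnn : ∀ p, 0 ≤ H p) :
    Lag H (0 : Euc n) = 0 := by
  refine le_antisymm (iSup_le fun p => ?_) (by simpa using lag_nonneg hH0 (0 : Euc n))
  have h1 : (⟪p, (0:Euc n)⟫ - H p : ℝ) ≤ (0:ℝ) := by
    simp only [inner_zero_right]; linarith [hHnn p]
  exact_mod_cast EReal.coe_le_coe_iff.mpr h1

lemma self_mem_TupSet {H : Euc n → ℝ} (hH0 : H 0 = 0) (hHnn : ∀ p, 0 ≤ H p)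
    {U : Set (Euc n)} {u : Euc n → ℝ} {x : Euc n} (hx : x ∈ U) (h : ℝ) :
    u x ∈ TupSet H U u h x := by
  refine ⟨x, hx, ?_⟩
  simp [sub_self, lag_zero hH0 hHnn]


lemma tupSet_bound {H : Euc n → ℝ} (hH0 : H 0 = 0) (hHnn : ∀ p, 0 ≤ H p) (hHc : Continuous H)
    {U : Set (Euc n)} (hU : IsOpen U) {u : Euc n → ℝ} {x : Euc n} (hx : x ∈ U)
    (hu : LocLipOn u U) {m M : ℝ} (hm : ∀ y ∈ U, m ≤ u y) (hM : ∀ y ∈ U, u y ≤ M) :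
    ∃ C : ℝ, 0 ≤ C ∧ ∀ h : ℝ, 0 < h → ∀ r ∈ TupSet H U u h x, r ≤ u x + h * C := by
  obtain ⟨K, s, hs, hlip⟩ := hu x hx
  rw [hU.nhdsWithin_eq hx] at hs
  have hsU : s ∩ U ∈ nhds x := Filter.inter_mem hs (hU.mem_nhds hx)
  obtain ⟨r₀, hr₀, hball⟩ := Metric.mem_nhds_iff.mp hsU
  have hMm : m ≤ M := le_trans (hm x hx) (hM x hx)
  set β : ℝ := (K : ℝ) + (M - m) / r₀ + 1 with hβdef
  have hdivnn : 0 ≤ (M - m) / r₀ := div_nonneg (by linarith) hr₀.le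
  have hβpos : 0 < β := by have := K.coe_nonneg; rw [hβdef]; linarith
  obtain ⟨p₂, _, hp₂max⟩ := (isCompact_closedBall (0 : Euc n) β).exists_isMaxOn
    ⟨0, by simpa using hβpos.le⟩ hHc.continuousOn
  refine ⟨H p₂, hHnn p₂, ?_⟩
  rintro h hh r ⟨y, hy, hr⟩
  set C := H p₂ with hCdef
  have hC0 : 0 ≤ C := hHnn p₂
  set Λ := Lag H (h⁻¹ • (y - x)) with hΛdef
  have hΛ0 : (0 : EReal) ≤ Λ := lag_nonneg hH0 _
  have hΛbot : Λ ≠ ⊥ := fun hb => by simp [hb] at hΛ0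
  have hΛtop : Λ ≠ ⊤ := by
    intro ht
    rw [ht, EReal.mul_top_of_pos (by exact_mod_cast hh), EReal.sub_top] at hr
    exact (EReal.coe_ne_bot r) hr
  set ℓ := Λ.toReal with hℓdef
  have hΛeq : (ℓ : EReal) = Λ := EReal.coe_toReal hΛtop hΛbot
  have hℓnn : 0 ≤ ℓ := by
    have := hΛ0; rw [← hΛeq] at this; exact_mod_cast this
  have hrr : r = u y - h * ℓ := by
    rw [← hΛeq, ← EReal.coe_mul, ← EReal.coe_sub] at hr
    exact_mod_cast hr
  have hℓge : ∀ p : Euc n, ⟪p, h⁻¹ • (y - x)⟫ - H p ≤ ℓ := by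
    intro p
    have h1 := le_iSup (fun p : Euc n => ((⟪p, h⁻¹ • (y - x)⟫ - H p : ℝ) : EReal)) p
    rw [show (⨆ p : Euc n, ((⟪p, h⁻¹ • (y - x)⟫ - H p : ℝ) : EReal)) = Λ from rfl, ← hΛeq] at h1
    exact_mod_cast h1
  by_cases hyx : y = x
  · subst hyx
    have := mul_nonneg hh.le hℓnn
    have := mul_nonneg hh.le hC0
    rw [hrr]; linarith
  · set w := y - x with hwdef
    have hw : 0 < ‖w‖ := by rw [norm_pos_iff]; exact sub_ne_zero.mpr hyx
    set p₀ : Euc n := (β / ‖w‖) • w with hp₀def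
    have hp₀ : ‖p₀‖ = β := by
      rw [hp₀def, norm_smul, Real.norm_eq_abs, abs_of_nonneg (div_nonneg hβpos.le hw.le),
        div_mul_cancel₀ _ hw.ne']
    have hip : ⟪p₀, h⁻¹ • w⟫ = h⁻¹ * (β * ‖w‖) := by
      rw [hp₀def, real_inner_smul_left, real_inner_smul_right, real_inner_self_eq_norm_sq]
      field_simp
    have hHp₀ : H p₀ ≤ C := hp₂max (by rw [mem_closedBall_zero_iff, hp₀])
    have h1 : h⁻¹ * (β * ‖w‖) - C ≤ ℓ := by
      have := hℓge p₀; rw [hip] at this; linarith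
    have h2 : β * ‖w‖ ≤ h * ℓ + h * C := by
      have h3 := mul_le_mul_of_nonneg_left h1 hh.le
      have h4 : h * (h⁻¹ * (β * ‖w‖)) = β * ‖w‖ := by field_simp
      rw [mul_sub, h4] at h3; linarith
    by_cases hnear : ‖w‖ < r₀
    · have hys : y ∈ s ∩ U := hball (by rw [mem_ball, dist_eq_norm]; exact hnear)
      have hxs : x ∈ s ∩ U := hball (by simp [hr₀])
      have hlipb : u y - u x ≤ (K : ℝ) * ‖w‖ := by
        have hd := hlip.dist_le_mul y hys.1 x hxs.1
        rw [Real.dist_eq, dist_eq_norm] at hd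
        calc u y - u x ≤ |u y - u x| := le_abs_self _
          _ ≤ (K : ℝ) * ‖y - x‖ := hd
      have hKβ : (K : ℝ) * ‖w‖ ≤ β * ‖w‖ := by
        apply mul_le_mul_of_nonneg_right _ hw.le
        rw [hβdef]; linarith
      rw [hrr]; linarith
    · push_neg at hnear
      have h5 : β * r₀ ≤ β * ‖w‖ := mul_le_mul_of_nonneg_left hnear hβpos.le
      have h6 : M - m ≤ β * r₀ := by
        have h7 : (M - m) / r₀ * r₀ = M - m := div_mul_cancel₀ _ hr₀.ne'
        have hKnn := K.coe_nonneg
        have hexp : β * r₀ = (K : ℝ) * r₀ + (M - m) / r₀ * r₀ + r₀ := by rw [hβdef]; ring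
        have hKr : 0 ≤ (K : ℝ) * r₀ := mul_nonneg hKnn hr₀.le
        rw [hexp, h7]; linarith
      have h8 : u y ≤ M := hM y hy
      have h9 : m ≤ u x := hm x hx
      rw [hrr]; linarith


lemma splus_nonneg {H : Euc n → ℝ} (hH0 : H 0 = 0) (hHnn : ∀ p, 0 ≤ H p) (hHc : Continuous H)
    {U : Set (Euc n)} (hU : IsOpen U) {u : Euc n → ℝ} {x : Euc n} (hx : x ∈ U)
    (hu : LocLipOn u U) {m M : ℝ} (hm : ∀ y ∈ U, m ≤ u y) (hM : ∀ y ∈ U, u y ≤ M) :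
    0 ≤ Splus H U u x := by
  obtain ⟨C, hC0, hCb⟩ := tupSet_bound hH0 hHnn hHc hU hx hu hm hM
  have hlow : ∀ h : ℝ, 0 < h → 0 ≤ (TupOn H U u h x - u x) / h := by
    intro h hh
    apply div_nonneg _ hh.le
    have h1 : u x ≤ TupOn H U u h x := by
      rw [TupOn_eq H U u hh.ne' x]
      exact le_csSup ⟨u x + h * C, fun r hr => hCb h hh r hr⟩ (self_mem_TupSet hH0 hHnn hx h)
    linarith
  have heq : Splus H U u x
      = sInf {a : ℝ | ∀ᶠ t in nhdsWithin (0:ℝ) (Ioi 0), (TupOn H U u t x - u x) / t ≤ a} :=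
    limsup_eq
  rw [heq]
  rcases eq_empty_or_nonempty
      {a : ℝ | ∀ᶠ t in nhdsWithin (0:ℝ) (Ioi 0), (TupOn H U u t x - u x) / t ≤ a} with hS | hS
  · rw [hS, Real.sInf_empty]
  · refine le_csInf hS fun a ha => ?_
    have hev0 : ∀ᶠ t in nhdsWithin (0:ℝ) (Ioi 0), 0 ≤ (TupOn H U u t x - u x) / t := by
      filter_upwards [self_mem_nhdsWithin] with t ht
      exact hlow t ht
    simp only [mem_setOf_eq] at ha
    obtain ⟨t, h1, h2⟩ := (ha.and hev0).exists
    linarith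

lemma dir_bound {H : Euc n → ℝ} (hH0 : H 0 = 0) (hHnn : ∀ p, 0 ≤ H p) (hHc : Continuous H)
    {U : Set (Euc n)} (hU : IsOpen U) {u : Euc n → ℝ} {x : Euc n} (hx : x ∈ U)
    (hu : LocLipOn u U) {m M : ℝ} (hm : ∀ y ∈ U, m ≤ u y) (hM : ∀ y ∈ U, u y ≤ M)
    {q : Euc n} {ℓ : ℝ} (hq : Lag H q = (ℓ : EReal)) {k η : ℝ} (hη : 0 < η)
    (hS : Splus H U u x ≤ k) :
    ∀ᶠ h in nhdsWithin (0:ℝ) (Ioi 0), u (x + h • q) - u x ≤ h * (ℓ + k + η) := by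
  obtain ⟨C, hC0, hCb⟩ := tupSet_bound hH0 hHnn hHc hU hx hu hm hM
  set S := {a : ℝ | ∀ᶠ t in nhdsWithin (0:ℝ) (Ioi 0), (TupOn H U u t x - u x) / t ≤ a} with hSdef
  have hfC : ∀ h : ℝ, 0 < h → (TupOn H U u h x - u x) / h ≤ C := by
    intro h hh
    have hub : TupOn H U u h x ≤ u x + h * C := by
      rw [TupOn_eq H U u hh.ne' x]
      exact csSup_le ⟨u x, self_mem_TupSet hH0 hHnn hx h⟩ (hCb h hh)
    rw [div_le_iff₀ hh]
    have := mul_comm h C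
    linarith
  have hSC : C ∈ S := by
    filter_upwards [self_mem_nhdsWithin] with t ht
    exact hfC t ht
  have hsplus : Splus H U u x = sInf S := limsup_eq
  obtain ⟨a, haS, hak⟩ : ∃ a ∈ S, a < k + η := by
    by_contra hcon
    push_neg at hcon
    have : k + η ≤ sInf S := le_csInf ⟨C, hSC⟩ hcon
    rw [hsplus] at hS
    linarith
  obtain ⟨r₁, hr₁, hball⟩ := Metric.isOpen_iff.mp hU x hx
  have hev1 : Ioo (0:ℝ) (r₁ / (‖q‖ + 1)) ∈ nhdsWithin (0:ℝ) (Ioi 0) :=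
    Ioo_mem_nhdsGT_of_mem ⟨le_rfl, by positivity⟩
  filter_upwards [haS, hev1] with h hfa hmemI
  obtain ⟨hh0, hhb⟩ := hmemI
  have hxq : x + h • q ∈ U := by
    apply hball
    rw [mem_ball, dist_eq_norm, add_sub_cancel_left, norm_smul, Real.norm_eq_abs,
      abs_of_pos hh0]
    have hq1 : 0 ≤ ‖q‖ := norm_nonneg q
    have hlt : h * (‖q‖ + 1) < r₁ := (lt_div_iff₀ (by positivity)).mp hhb
    nlinarith
  have hmem : u (x + h • q) - h * ℓ ∈ TupSet H U u h x := by
    refine ⟨x + h • q, hxq, ?_⟩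
    have hsimp : h⁻¹ • ((x + h • q) - x) = q := by
      rw [add_sub_cancel_left, smul_smul, inv_mul_cancel₀ hh0.ne', one_smul]
    rw [hsimp, hq, ← EReal.coe_mul, ← EReal.coe_sub]
  have hbdd : BddAbove (TupSet H U u h x) := ⟨u x + h * C, fun r hr => hCb h hh0 r hr⟩
  have hle : u (x + h • q) - h * ℓ ≤ TupOn H U u h x := by
    rw [TupOn_eq H U u hh0.ne' x]
    exact le_csSup hbdd hmem
  have hfb : TupOn H U u h x - u x ≤ h * a := by
    rw [div_le_iff₀ hh0] at hfa
    have := mul_comm h a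
    linarith
  have hmono : h * a ≤ h * (k + η) := mul_le_mul_of_nonneg_left hak.le hh0.le
  have hexp : h * (ℓ + k + η) = h * ℓ + h * (k + η) := by ring
  linarith


lemma dini_seg {g : ℝ → ℝ} {T M : ℝ} (hT : 0 < T) (hg : ContinuousOn g (Icc 0 T))
    (hs : ∀ τ ∈ Ioo 0 T, ∀ᶠ h in nhdsWithin (0:ℝ) (Ioi 0), g (τ + h) - g τ ≤ h * M) :
    g T - g 0 ≤ T * M := by
  have step : ∀ σ ∈ Ioo 0 T, g T ≤ g σ + M * (T - σ) := by
    intro σ hσ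
    have main := image_le_of_liminf_slope_right_le_deriv_boundary
      (f := g) (a := σ) (b := T) (hg.mono (Icc_subset_Icc hσ.1.le le_rfl))
      (B := fun t => g σ + M * (t - σ)) (B' := fun _ => M)
      (by simp)
      (Continuous.continuousOn (by continuity))
      (fun t _ => by
        simpa using (((hasDerivWithinAt_id t (Ici t)).sub_const σ).const_mul M).const_add (g σ))
      ?_
    · have := main (right_mem_Icc.mpr hσ.2.le)
      linarith
    · intro t ht r hr
      have htI : t ∈ Ioo 0 T := ⟨lt_of_lt_of_le hσ.1 ht.1, ht.2⟩
      have hev := hs t htI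
      have htd : Filter.Tendsto (fun z : ℝ => z - t) (nhdsWithin t (Ioi t))
          (nhdsWithin 0 (Ioi 0)) := by
        apply tendsto_nhdsWithin_of_tendsto_nhds_of_eventually_within
        · have h1 : Filter.Tendsto (fun z : ℝ => z - t) (nhds t) (nhds (t - t)) :=
            (continuous_id.sub continuous_const).tendsto t
          rw [sub_self] at h1
          exact h1.mono_left nhdsWithin_le_nhds
        · filter_upwards [self_mem_nhdsWithin] with z hz
          exact sub_pos.mpr (mem_Ioi.mp hz)
      have hev2 : ∀ᶠ z in nhdsWithin t (Ioi t), g (t + (z - t)) - g t ≤ (z - t) * M :=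
        htd.eventually hev
      have hev3 : ∀ᶠ z in nhdsWithin t (Ioi t), t < z := self_mem_nhdsWithin
      refine ((hev2.and hev3).frequently).mono ?_
      rintro z ⟨h1, h2⟩
      have hzt : 0 < z - t := sub_pos.mpr h2
      rw [slope_def_field, div_lt_iff₀ hzt]
      have h3 : g z - g t ≤ (z - t) * M := by
        have : t + (z - t) = z := by ring
        rwa [this] at h1
      have h4 : (z - t) * M < (z - t) * r := mul_lt_mul_of_pos_left hr hzt
      have := mul_comm r (z - t)
      linarith
  have hne : (nhdsWithin (0:ℝ) (Ioo 0 T)).NeBot := by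
    apply mem_closure_iff_nhdsWithin_neBot.mp
    rw [closure_Ioo hT.ne]
    exact ⟨le_rfl, hT.le⟩
  have htend : Filter.Tendsto (fun σ => g σ + M * (T - σ)) (nhdsWithin (0:ℝ) (Ioo 0 T))
      (nhds (g 0 + M * (T - 0))) := by
    apply Filter.Tendsto.add
    · exact (hg.continuousWithinAt (left_mem_Icc.mpr hT.le)).mono_left
        (nhdsWithin_mono _ Ioo_subset_Icc_self)
    · have hc : Continuous fun σ : ℝ => M * (T - σ) := by continuity
      exact (hc.tendsto 0).mono_left nhdsWithin_le_nhds
  have hfin := ge_of_tendsto htend (Filter.eventually_of_mem self_mem_nhdsWithin step)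
  rw [sub_zero] at hfin
  linarith [mul_comm M T]

lemma seg_fwd {H : Euc n → ℝ} (hH0 : H 0 = 0) (hHnn : ∀ p, 0 ≤ H p) (hHc : Continuous H)
    {U : Set (Euc n)} (hU : IsOpen U) {u : Euc n → ℝ} (hu : LocLipOn u U)
    (hucl : ContinuousOn u (closure U))
    {m M : ℝ} (hm : ∀ y ∈ U, m ≤ u y) (hM : ∀ y ∈ U, u y ≤ M)
    {k : ℝ} (hk : ∀ y ∈ U, Splus H U u y ≤ k)
    {q : Euc n} {ℓ : ℝ} (hq : Lag H q = (ℓ : EReal))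
    {x : Euc n} {T : ℝ} (hT : 0 < T) (hmid : ∀ τ, 0 ≤ τ → τ < T → x + τ • q ∈ U)
    (hend : x + T • q ∈ closure U) :
    u (x + T • q) - u x ≤ T * (ℓ + k) := by
  have hpath : Continuous fun τ : ℝ => x + τ • q := by continuity
  have hmaps : MapsTo (fun τ : ℝ => x + τ • q) (Icc 0 T) (closure U) := by
    rintro τ ⟨h0, h1⟩
    rcases lt_or_eq_of_le h1 with h | h
    · exact subset_closure (hmid τ h0 h)
    · simp only [h]; exact hend
  have hgc : ContinuousOn (fun τ => u (x + τ • q)) (Icc 0 T) :=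
    hucl.comp hpath.continuousOn hmaps
  have key : ∀ η : ℝ, 0 < η → u (x + T • q) - u x ≤ T * (ℓ + k + η) := by
    intro η hη
    have hdini := dini_seg (g := fun τ => u (x + τ • q)) (M := ℓ + k + η) hT hgc ?_
    · simpa using hdini
    · intro τ hτ
      have hxτ : x + τ • q ∈ U := hmid τ hτ.1.le hτ.2
      have hev := dir_bound hH0 hHnn hHc hU hxτ hu hm hM hq hη (hk _ hxτ)
      filter_upwards [hev] with h hh
      have hid : (x + τ • q) + h • q = x + (τ + h) • q := by
        module
      rwa [hid] at hh
  refine le_of_forall_pos_le_add fun ε hε => ?_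
  have h1 := key (ε / T) (by positivity)
  have h2 : T * (ℓ + k + ε / T) = T * (ℓ + k) + ε := by
    field_simp
  linarith

lemma seg_bwd {H : Euc n → ℝ} (hH0 : H 0 = 0) (hHnn : ∀ p, 0 ≤ H p) (hHc : Continuous H)
    {U : Set (Euc n)} (hU : IsOpen U) {u : Euc n → ℝ} (hu : LocLipOn u U)
    (hucl : ContinuousOn u (closure U))
    {m M : ℝ} (hm : ∀ y ∈ U, m ≤ u y) (hM : ∀ y ∈ U, u y ≤ M)
    {k : ℝ} (hk : ∀ y ∈ U, Splus H U u y ≤ k)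
    {q : Euc n} {ℓ' : ℝ} (hq : Lag H (-q) = (ℓ' : EReal))
    {x : Euc n} {T : ℝ} (hT : 0 < T) (hmid : ∀ τ, 0 ≤ τ → τ < T → x + τ • q ∈ U)
    (hend : x + T • q ∈ closure U) :
    u x - u (x + T • q) ≤ T * (ℓ' + k) := by
  have hpath : Continuous fun τ : ℝ => x + (T - τ) • q := by continuity
  have hmaps : MapsTo (fun τ : ℝ => x + (T - τ) • q) (Icc 0 T) (closure U) := by
    rintro τ ⟨h0, h1⟩
    rcases lt_or_eq_of_le h0 with h | h
    · exact subset_closure (hmid (T - τ) (by linarith) (by linarith))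
    · simp only [← h, sub_zero]; exact hend
  have hgc : ContinuousOn (fun τ => u (x + (T - τ) • q)) (Icc 0 T) :=
    hucl.comp hpath.continuousOn hmaps
  have key : ∀ η : ℝ, 0 < η → u x - u (x + T • q) ≤ T * (ℓ' + k + η) := by
    intro η hη
    have hdini := dini_seg (g := fun τ => u (x + (T - τ) • q)) (M := ℓ' + k + η) hT hgc ?_
    · simpa using hdini
    · intro τ hτ
      have hxτ : x + (T - τ) • q ∈ U := hmid (T - τ) (by linarith [hτ.2]) (by linarith [hτ.1])
      have hev := dir_bound hH0 hHnn hHc hU hxτ hu hm hM hq hη (hk _ hxτ)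
      filter_upwards [hev] with h hh
      have hid : (x + (T - τ) • q) + h • (-q) = x + (T - (τ + h)) • q := by
        module
      rwa [hid] at hh
  refine le_of_forall_pos_le_add fun ε hε => ?_
  have h1 := key (ε / T) (by positivity)
  have h2 : T * (ℓ' + k + ε / T) = T * (ℓ' + k) + ε := by
    field_simp
  linarith


lemma exists_good_direction (hn : 1 ≤ n) (H : Euc n → ℝ)
    (hHconv : ConvexOn ℝ Set.univ H) (hH0 : H 0 = 0) (hHnn : ∀ p, 0 ≤ H p)
    (hHzb : Bornology.IsBounded {p : Euc n | H p = 0})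
    (hHzi : interior {p : Euc n | H p = 0} = ∅) {δ : ℝ} (hδ : 0 < δ) :
    ∃ (q : Euc n) (ρ ℓp ℓm : ℝ), 0 < ρ ∧ ‖q‖ = ρ ∧
      Lag H q = (ℓp : EReal) ∧ Lag H (-q) = (ℓm : EReal) ∧ ℓp ≤ ρ * δ ∧ ℓm ≤ ρ * δ ∧
      0 ≤ ℓp ∧ 0 ≤ ℓm := by
  have hHc : Continuous H := by
    rw [← continuousOn_univ]
    exact hHconv.continuousOn isOpen_univ
  set Z := {p : Euc n | H p = 0} with hZdef
  have hZ0 : (0 : Euc n) ∈ Z := hH0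
  have hZconv : Convex ℝ Z := by
    have hZeq : Z = {p | p ∈ (univ : Set (Euc n)) ∧ H p ≤ 0} := by
      ext p
      exact ⟨fun h => ⟨mem_univ _, le_of_eq h⟩, fun h => le_antisymm h.2 (hHnn p)⟩
    rw [hZeq]
    exact hHconv.convex_le 0
  -- a unit direction orthogonal to Z
  have hAS : affineSpan ℝ Z ≠ ⊤ := by
    intro htop
    have := (hZconv.interior_nonempty_iff_affineSpan_eq_top).mpr htop
    rw [hHzi] at this
    exact Set.not_nonempty_empty this
  have hVS : vectorSpan ℝ Z ≠ ⊤ := fun h =>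
    hAS ((AffineSubspace.affineSpan_eq_top_iff_vectorSpan_eq_top_of_nonempty ℝ (Euc n) (Euc n)
      ⟨0, hZ0⟩).mpr h)
  have hOrth : (vectorSpan ℝ Z)ᗮ ≠ ⊥ := fun h => hVS (Submodule.orthogonal_eq_bot_iff.mp h)
  obtain ⟨e₀, he₀V, he₀⟩ := Submodule.exists_mem_ne_zero_of_ne_bot hOrth
  set e : Euc n := ‖e₀‖⁻¹ • e₀ with hedef
  have he1 : ‖e‖ = 1 := norm_smul_inv_norm he₀
  have heZ : ∀ p ∈ Z, ⟪p, e⟫ = 0 := by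
    intro p hp
    have hp' : p ∈ vectorSpan ℝ Z := by
      have := vsub_mem_vectorSpan ℝ hp hZ0
      rwa [vsub_eq_sub, sub_zero] at this
    have h0 : ⟪p, e₀⟫ = 0 := (Submodule.mem_orthogonal _ e₀).mp he₀V p hp'
    rw [hedef, real_inner_smul_right, h0, mul_zero]
  -- coercivity
  obtain ⟨R₀, hR₀⟩ := hHzb.subset_closedBall 0
  set R : ℝ := max R₀ 1 with hRdef
  have hR1 : (1:ℝ) ≤ R := le_max_right _ _
  have hRpos : (0:ℝ) < R := lt_of_lt_of_le one_pos hR1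
  have hR : Z ⊆ closedBall 0 R := hR₀.trans (closedBall_subset_closedBall (le_max_left _ _))
  haveI : Nontrivial (Euc n) := by
    apply Module.nontrivial_of_finrank_pos (R := ℝ)
    rw [finrank_euclideanSpace_fin]
    exact hn
  obtain ⟨pa, hpamem, hpamin⟩ := (isCompact_sphere (0 : Euc n) (2*R)).exists_isMinOn
    (NormedSpace.sphere_nonempty.mpr (by positivity)) hHc.continuousOn
  set a : ℝ := H pa with hadef
  have hpanorm : ‖pa‖ = 2*R := by rwa [mem_sphere_zero_iff_norm] at hpamem
  have ha : 0 < a := by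
    rcases (hHnn pa).lt_or_eq with h | h
    · exact h
    · exfalso
      have hpaZ : pa ∈ Z := h.symm
      have := hR hpaZ
      rw [mem_closedBall_zero_iff, hpanorm] at this
      linarith
  set γ : ℝ := a / (2*R) with hγdef
  have hγ : 0 < γ := by positivity
  have hcoer : ∀ p : Euc n, γ * ‖p‖ - a ≤ H p := by
    intro p
    by_cases hp : ‖p‖ ≤ 2*R
    · have h1 : γ * ‖p‖ ≤ γ * (2*R) := mul_le_mul_of_nonneg_left hp hγ.le
      have h2 : γ * (2*R) = a := by rw [hγdef]; field_simp
      have := hHnn p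
      linarith
    · push_neg at hp
      have hp0 : 0 < ‖p‖ := lt_trans (by positivity) hp
      set t : ℝ := (2*R) / ‖p‖ with htdef
      have ht0 : 0 < t := by positivity
      have ht1 : t < 1 := (div_lt_one hp0).mpr hp
      have hmem : t • p ∈ sphere (0 : Euc n) (2*R) := by
        rw [mem_sphere_zero_iff_norm, norm_smul, Real.norm_eq_abs, abs_of_pos ht0, htdef]
        field_simp
      have hcvx := hHconv.2 (mem_univ p) (mem_univ (0 : Euc n)) ht0.le (by linarith)
        (by ring : t + (1 - t) = 1)
      simp only [smul_zero, add_zero, hH0, smul_eq_mul, mul_zero] at hcvx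
      have h6 : a ≤ t * H p := le_trans (hpamin hmem) hcvx
      have h7 : a * ‖p‖ ≤ 2*R * H p := by
        have h8 := mul_le_mul_of_nonneg_right h6 hp0.le
        have h9 : t * H p * ‖p‖ = 2*R * H p := by rw [htdef]; field_simp
        rwa [h9] at h8
      have h10 : γ * ‖p‖ ≤ H p := by
        rw [hγdef, div_mul_eq_mul_div, div_le_iff₀ (by positivity : (0:ℝ) < 2*R)]
        have := mul_comm (H p) (2*R)
        linarith
      linarith
  -- the slab bound
  have hκ : ∃ κ : ℝ, 0 < κ ∧ ∀ p : Euc n, δ ≤ |⟪p, e⟫| → κ ≤ H p := by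
    set P₀ : ℝ := (a + 1) / γ with hP₀def
    have hfar : ∀ p : Euc n, P₀ < ‖p‖ → 1 ≤ H p := by
      intro p hpP
      have h1 : γ * P₀ = a + 1 := by rw [hP₀def]; field_simp
      have h2 : γ * P₀ ≤ γ * ‖p‖ := mul_le_mul_of_nonneg_left hpP.le hγ.le
      have := hcoer p
      linarith
    have hKcl : IsClosed {p : Euc n | δ ≤ |⟪p, e⟫|} := by
      have hcont : Continuous fun p : Euc n => |⟪p, e⟫| :=
        (continuous_id.inner continuous_const).abs
      exact isClosed_le continuous_const hcont
    set Kset := closedBall (0 : Euc n) P₀ ∩ {p : Euc n | δ ≤ |⟪p, e⟫|} with hKsetdef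
    rcases Kset.eq_empty_or_nonempty with hKe | hKne
    · refine ⟨1, one_pos, fun p hp => ?_⟩
      by_cases hpP : ‖p‖ ≤ P₀
      · exfalso
        have : p ∈ Kset := ⟨mem_closedBall_zero_iff.mpr hpP, hp⟩
        rw [hKe] at this
        exact this
      · exact hfar p (not_le.mp hpP)
    · obtain ⟨pκ, hpκmem, hpκmin⟩ :=
        ((isCompact_closedBall (0 : Euc n) P₀).inter_right hKcl).exists_isMinOn hKne
          hHc.continuousOn
      have hpκpos : 0 < H pκ := by
        rcases (hHnn pκ).lt_or_eq with h | h
        · exact h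
        · exfalso
          have hpκZ : pκ ∈ Z := h.symm
          have := heZ pκ hpκZ
          have h2 := hpκmem.2
          rw [mem_setOf_eq, this, abs_zero] at h2
          linarith
      refine ⟨min 1 (H pκ), lt_min one_pos hpκpos, fun p hp => ?_⟩
      by_cases hpP : ‖p‖ ≤ P₀
      · exact le_trans (min_le_right _ _) (hpκmin ⟨mem_closedBall_zero_iff.mpr hpP, hp⟩)
      · exact le_trans (min_le_left _ _) (hfar p (not_le.mp hpP))
  obtain ⟨κ, hκpos, hκb⟩ := hκ
  set ρ : ℝ := γ * κ / (2 * (a + κ)) with hρdef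
  have hρ : 0 < ρ := by positivity
  have hkey : ∀ p : Euc n, ρ * |⟪p, e⟫| - H p ≤ ρ * δ := by
    intro p
    by_cases hpe : |⟪p, e⟫| ≤ δ
    · have h1 : ρ * |⟪p, e⟫| ≤ ρ * δ := mul_le_mul_of_nonneg_left hpe hρ.le
      linarith [hHnn p]
    · push_neg at hpe
      have hκle : κ ≤ H p := hκb p hpe.le
      have h2 : γ * ‖p‖ - a ≤ H p := hcoer p
      have h3 : |⟪p, e⟫| ≤ ‖p‖ := by
        have := abs_real_inner_le_norm p e
        rwa [he1, mul_one] at this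
      have h4 : ρ * ‖p‖ ≤ H p := by
        have h5 : γ * ‖p‖ ≤ H p + a := by linarith
        rw [hρdef, div_mul_eq_mul_div, div_le_iff₀ (by positivity : (0:ℝ) < 2 * (a + κ))]
        have hnp : 0 ≤ ‖p‖ := norm_nonneg p
        nlinarith [mul_le_mul_of_nonneg_left h5 hκpos.le, mul_le_mul_of_nonneg_left hκle ha.le,
          mul_le_mul_of_nonneg_left hκle hκpos.le]
      have h6 : ρ * |⟪p, e⟫| ≤ ρ * ‖p‖ := mul_le_mul_of_nonneg_left h3 hρ.le
      have h7 : 0 ≤ ρ * δ := by positivity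
      linarith
  set q : Euc n := ρ • e with hqdef
  have hqn : ‖q‖ = ρ := by
    rw [hqdef, norm_smul, Real.norm_eq_abs, abs_of_pos hρ, he1, mul_one]
  have hLqle : Lag H q ≤ ((ρ * δ : ℝ) : EReal) := by
    apply iSup_le
    intro p
    rw [EReal.coe_le_coe_iff]
    have h1 : ⟪p, q⟫ = ρ * ⟪p, e⟫ := by rw [hqdef, real_inner_smul_right]
    have h2 : ρ * ⟪p, e⟫ ≤ ρ * |⟪p, e⟫| := mul_le_mul_of_nonneg_left (le_abs_self _) hρ.le
    rw [h1]
    linarith [hkey p]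
  have hLmle : Lag H (-q) ≤ ((ρ * δ : ℝ) : EReal) := by
    apply iSup_le
    intro p
    rw [EReal.coe_le_coe_iff]
    have h1 : ⟪p, -q⟫ = -(ρ * ⟪p, e⟫) := by rw [inner_neg_right, hqdef, real_inner_smul_right]
    have h2 : -(ρ * ⟪p, e⟫) = ρ * (-⟪p, e⟫) := by ring
    have h3 : ρ * (-⟪p, e⟫) ≤ ρ * |⟪p, e⟫| := mul_le_mul_of_nonneg_left (neg_le_abs _) hρ.le
    rw [h1]
    linarith [hkey p]
  have hbotq : Lag H q ≠ ⊥ := fun h => by simpa [h] using lag_nonneg hH0 q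
  have hbotm : Lag H (-q) ≠ ⊥ := fun h => by simpa [h] using lag_nonneg hH0 (-q)
  have htopq : Lag H q ≠ ⊤ := ne_top_of_le_ne_top (EReal.coe_ne_top _) hLqle
  have htopm : Lag H (-q) ≠ ⊤ := ne_top_of_le_ne_top (EReal.coe_ne_top _) hLmle
  refine ⟨q, ρ, (Lag H q).toReal, (Lag H (-q)).toReal, hρ, hqn,
    (EReal.coe_toReal htopq hbotq).symm, (EReal.coe_toReal htopm hbotm).symm, ?_, ?_, ?_, ?_⟩
  · have := EReal.toReal_le_toReal hLqle hbotq (EReal.coe_ne_top _)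
    rwa [EReal.toReal_coe] at this
  · have := EReal.toReal_le_toReal hLmle hbotm (EReal.coe_ne_top _)
    rwa [EReal.toReal_coe] at this
  · have := EReal.toReal_le_toReal (lag_nonneg hH0 q) (by simp) htopq
    rwa [EReal.toReal_zero] at this
  · have := EReal.toReal_le_toReal (lag_nonneg hH0 (-q)) (by simp) htopm
    rwa [EReal.toReal_zero] at this


end PrepatchAux

/-- If `S⁺u + S⁺v` is uniformly small and `u = v` on `∂U`, then `u` and `v` are uniformly
close, with a smallness threshold depending only on `H`, `diam U` and `ε`. -/
theorem prepatch {n : ℕ} (hn : 1 ≤ n) (H : Euc n → ℝ)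
    (hHconv : ConvexOn ℝ Set.univ H) (hH0 : H 0 = 0) (hHnonneg : ∀ p, 0 ≤ H p)
    (hHzb : Bornology.IsBounded {p : Euc n | H p = 0})
    (hHzi : interior {p : Euc n | H p = 0} = ∅) :
    ∀ ε d : ℝ, 0 < ε → 0 < d → ∃ k > (0:ℝ),
      ∀ U : Set (Euc n), IsOpen U → Bornology.IsBounded U → Metric.diam U ≤ d →
        ∀ u v : Euc n → ℝ,
          LocLipOn u U → ContinuousOn u (closure U) →
          LocLipOn v U → ContinuousOn v (closure U) →
          EqOn u v (frontier U) →
          (∀ x ∈ U, Splus H U u x + Splus H U v x ≤ k) →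
          ∀ x ∈ closure U, |u x - v x| ≤ ε := by
  intro ε d hε hd
  have hHc : Continuous H := by
    rw [← continuousOn_univ]
    exact hHconv.continuousOn isOpen_univ
  obtain ⟨q, ρ, ℓp, ℓm, hρ, hqn, hLp, hLm, hℓp, hℓm, hℓp0, hℓm0⟩ :=
    exists_good_direction hn H hHconv hH0 hHnonneg hHzb hHzi
      (δ := ε / (4 * d)) (by positivity)
  refine ⟨ρ * ε / (8 * d), by positivity, ?_⟩
  intro U hUo hUb hUd u v hu hucl hv hvcl heq hsum x hxcl
  set k : ℝ := ρ * ε / (8 * d) with hkdef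
  by_cases hxU : x ∈ U
  · have hcl : IsCompact (closure U) := hUb.isCompact_closure
    have hbounds : ∀ w : Euc n → ℝ, ContinuousOn w (closure U) →
        ∃ mw Mw : ℝ, (∀ y ∈ U, mw ≤ w y) ∧ (∀ y ∈ U, w y ≤ Mw) := by
      intro w hw
      obtain ⟨pM, _, hpM⟩ := hcl.exists_isMaxOn ⟨x, subset_closure hxU⟩ hw
      obtain ⟨pm, _, hpm⟩ := hcl.exists_isMinOn ⟨x, subset_closure hxU⟩ hw
      exact ⟨w pm, w pM, fun y hy => hpm (subset_closure hy),
        fun y hy => hpM (subset_closure hy)⟩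
    obtain ⟨mu, Mu, hmu, hMu⟩ := hbounds u hucl
    obtain ⟨mv, Mv, hmv, hMv⟩ := hbounds v hvcl
    have hSu : ∀ y ∈ U, Splus H U u y ≤ k := by
      intro y hy
      have h0 := splus_nonneg hH0 hHnonneg hHc hUo hy hv hmv hMv
      linarith [hsum y hy]
    have hSv : ∀ y ∈ U, Splus H U v y ≤ k := by
      intro y hy
      have h0 := splus_nonneg hH0 hHnonneg hHc hUo hy hu hmu hMu
      linarith [hsum y hy]
    obtain ⟨RU, hRU⟩ := hUb.subset_closedBall x
    have hRU0 : 0 ≤ RU := by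
      have := hRU hxU
      rwa [mem_closedBall, dist_self] at this
    set Sx : Set ℝ := Ici 0 ∩ ((fun τ : ℝ => x + τ • q) ⁻¹' Uᶜ) with hSxdef
    have hpathc : Continuous fun τ : ℝ => x + τ • q :=
      continuous_const.add (continuous_id.smul continuous_const)
    have hScl : IsClosed Sx :=
      isClosed_Ici.inter (IsClosed.preimage hpathc hUo.isClosed_compl)
    have hSmem : (RU + 1) / ρ ∈ Sx := by
      constructor
      · exact mem_Ici.mpr (by positivity)
      · intro hc
        have h1 := hRU hc
        rw [mem_closedBall, dist_eq_norm, add_sub_cancel_left, norm_smul, Real.norm_eq_abs,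
          abs_of_nonneg (by positivity : (0:ℝ) ≤ (RU + 1) / ρ), hqn] at h1
        have h2 : (RU + 1) / ρ * ρ = RU + 1 := div_mul_cancel₀ _ hρ.ne'
        rw [h2] at h1
        linarith
    have hSbdd : BddBelow Sx := ⟨0, fun τ hτ => hτ.1⟩
    set T : ℝ := sInf Sx with hTdef
    have hTmem := hScl.csInf_mem ⟨_, hSmem⟩ hSbdd
    have hT0 : (0:ℝ) ≤ T := hTmem.1
    have hTnotU : x + T • q ∉ U := hTmem.2
    have hTne : T ≠ 0 := by
      intro h
      apply hTnotU
      rw [h, zero_smul, add_zero]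
      exact hxU
    have hTpos : 0 < T := hT0.lt_of_ne (Ne.symm hTne)
    have hmid : ∀ τ, 0 ≤ τ → τ < T → x + τ • q ∈ U := by
      intro τ h0 hτ
      by_contra hc
      exact absurd (csInf_le hSbdd ⟨h0, hc⟩) (not_le.mpr hτ)
    have hend : x + T • q ∈ closure U := by
      have htd : Filter.Tendsto (fun τ : ℝ => x + τ • q) (nhdsWithin T (Iio T))
          (nhds (x + T • q)) := by
        apply Filter.Tendsto.mono_left _ nhdsWithin_le_nhds
        exact hpathc.tendsto T
      apply mem_closure_of_tendsto htd
      filter_upwards [Ioo_mem_nhdsLT_of_mem (⟨hTpos, le_rfl⟩ : T ∈ Ioc 0 T)] with τ hτ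
      exact hmid τ hτ.1.le hτ.2
    have hfr : x + T • q ∈ frontier U := ⟨hend, by rwa [hUo.interior_eq]⟩
    have hT1 : T ≤ d / ρ := by
      have hdist : dist (x + T • q) x = T * ρ := by
        rw [dist_eq_norm, add_sub_cancel_left, norm_smul, Real.norm_eq_abs,
          abs_of_nonneg hT0, hqn]
      have h1 : dist (x + T • q) x ≤ diam (closure U) :=
        dist_le_diam_of_mem hUb.closure hend (subset_closure hxU)
      rw [diam_closure, hdist] at h1
      rw [le_div_iff₀ hρ]
      linarith [hUd]
    have hcomb : ∀ ℓ : ℝ, 0 ≤ ℓ → ℓ ≤ ρ * (ε / (4 * d)) → T * (ℓ + k) ≤ 3 * ε / 8 := by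
      intro ℓ h0 hℓ
      have hk0 : (0:ℝ) < k := by rw [hkdef]; positivity
      have h1 : T * (ℓ + k) ≤ (d / ρ) * (ℓ + k) :=
        mul_le_mul_of_nonneg_right hT1 (by linarith)
      have h2 : (d / ρ) * (ℓ + k) ≤ (d / ρ) * (ρ * (ε / (4 * d)) + ρ * ε / (8 * d)) := by
        apply mul_le_mul_of_nonneg_left _ (by positivity)
        rw [hkdef]
        linarith
      have h3 : (d / ρ) * (ρ * (ε / (4 * d)) + ρ * ε / (8 * d)) = 3 * ε / 8 := by
        field_simp
        ring
      linarith
    have hu1 := seg_fwd hH0 hHnonneg hHc hUo hu hucl hmu hMu hSu hLp hTpos hmid hend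
    have hu2 := seg_bwd hH0 hHnonneg hHc hUo hu hucl hmu hMu hSu hLm hTpos hmid hend
    have hv1 := seg_fwd hH0 hHnonneg hHc hUo hv hvcl hmv hMv hSv hLp hTpos hmid hend
    have hv2 := seg_bwd hH0 hHnonneg hHc hUo hv hvcl hmv hMv hSv hLm hTpos hmid hend
    have hbp := hcomb ℓp hℓp0 hℓp
    have hbm := hcomb ℓm hℓm0 hℓm
    have hub : u (x + T • q) = v (x + T • q) := heq hfr
    have e1 : u x - v x = (u x - u (x + T • q)) - (v x - v (x + T • q)) := by
      rw [hub]; ring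
    have habsu : |u x - u (x + T • q)| ≤ 3 * ε / 8 := by
      rw [abs_le]; constructor <;> [linarith; linarith]
    have habsv : |v x - v (x + T • q)| ≤ 3 * ε / 8 := by
      rw [abs_le]; constructor <;> [linarith; linarith]
    have htri : |u x - v x| ≤ |u x - u (x + T • q)| + |v x - v (x + T • q)| := by
      rw [e1, sub_eq_add_neg]
      exact (abs_add_le _ _).trans (by rw [abs_neg])
    linarith
  · have hxfr : x ∈ frontier U := ⟨hxcl, by rwa [hUo.interior_eq]⟩
    rw [heq hxfr, sub_self, abs_zero]
    exact hε.le
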